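/- Let S ⊆ ℝⁿ contain x̄ and let v ∈ N_{x̄}S be a unit vector in the normal cone of S at x̄. Then dist(x̄ + tv, S) = t + o(t) as t → 0⁺. -/

import Mathlib

open Metric Filter Topology Asymptotics
open scoped RealInnerProductSpace

/-- The normal cone to a set `S` at `y`: the polar of the (positive) tangent cone. -/
def normalCone {n : ℕ} (S : Set (EuclideanSpace ℝ (Fin n))) (y : EuclideanSpace ℝ (Fin n)) :
    Set (EuclideanSpace ℝ (Fin n)) :=
  {w | ∀ u ∈ posTangentConeAt S y, ⟪w, u⟫ ≤ 0}

/-- Moving away from `S` along a unit normal direction, the distance to `S` grows at unit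
first-order rate: `dist(xb + tv, S) = t + o(t)` as `t → 0⁺`. -/
theorem dist_along_normal {n : ℕ}
    (S : Set (EuclideanSpace ℝ (Fin n))) (xb : EuclideanSpace ℝ (Fin n)) (hxb : xb ∈ S)
    (hproj : ∀ᶠ x in 𝓝 xb, ∃ y ∈ S, dist x y = Metric.infDist x S)
    (v : EuclideanSpace ℝ (Fin n)) (hv : ‖v‖ = 1) (hvN : v ∈ normalCone S xb) :
    (fun t : ℝ => Metric.infDist (xb + t • v) S - t) =o[𝓝[>] (0 : ℝ)] fun t => t := by
  rw [isLittleO_iff]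
  intro ε hε
  by_contra hcon
  -- eventual facts along 𝓝[>]0
  have htend0 : Tendsto (fun t : ℝ => xb + t • v) (𝓝[>] (0:ℝ)) (𝓝 xb) := by
    have hc : Continuous fun t : ℝ => xb + t • v := by continuity
    have := hc.tendsto' 0 xb (by simp)
    exact this.mono_left nhdsWithin_le_nhds
  have hev : ∀ᶠ t : ℝ in 𝓝[>] (0:ℝ), 0 < t ∧
      ∃ y ∈ S, dist (xb + t • v) y = Metric.infDist (xb + t • v) S :=
    (eventually_mem_nhdsWithin.mono fun t ht => ht).and (htend0.eventually hproj)
  have hfreq := (Filter.not_eventually.mp hcon).and_eventually hev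
  obtain ⟨t, htend, hP⟩ := Filter.exists_seq_forall_of_frequently hfreq
  have ht0 : ∀ k, 0 < t k := fun k => (hP k).2.1
  choose y hyS hyd using fun k => (hP k).2.2
  set d : ℕ → EuclideanSpace ℝ (Fin n) := fun k => y k - xb with hd
  -- infDist ≤ t k
  have hle : ∀ k, Metric.infDist (xb + t k • v) S ≤ t k := fun k => by
    have h := Metric.infDist_le_dist_of_mem (x := xb + t k • v) hxb
    simpa [dist_eq_norm, norm_smul, abs_of_pos (ht0 k), hv] using h
  have hinf0 : ∀ k, 0 ≤ Metric.infDist (xb + t k • v) S := fun k => Metric.infDist_nonneg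
  -- bad inequality: t k - infDist > ε * t k
  have hbad : ∀ k, Metric.infDist (xb + t k • v) S < t k - ε * t k := fun k => by
    have h := (hP k).1
    rw [not_le, Real.norm_eq_abs, Real.norm_eq_abs, abs_of_pos (ht0 k)] at h
    have habs : |Metric.infDist (xb + t k • v) S - t k| =
        t k - Metric.infDist (xb + t k • v) S := by
      rw [abs_of_nonpos (by linarith [hle k])]; ring
    linarith [habs ▸ h]
  -- inner bound
  have hinner : ∀ k, ε * t k < ⟪v, d k⟫ := fun k => by
    have h1 : ⟪v, (xb + t k • v) - y k⟫ ≤ ‖(xb + t k • v) - y k‖ := by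
      have := real_inner_le_norm v ((xb + t k • v) - y k)
      simpa [hv] using this
    have h2 : ‖(xb + t k • v) - y k‖ = Metric.infDist (xb + t k • v) S := by
      rw [← dist_eq_norm]; exact hyd k
    have h3 : ⟪v, (xb + t k • v) - y k⟫ = t k - ⟪v, d k⟫ := by
      have : (xb + t k • v) - y k = t k • v - (y k - xb) := by abel
      rw [this, inner_sub_right, real_inner_smul_right, real_inner_self_eq_norm_sq, hv]
      ring
    have := hbad k
    nlinarith [h1, h2 ▸ h1]
  have hdpos : ∀ k, 0 < ‖d k‖ := fun k => by
    have h1 : ⟪v, d k⟫ ≤ ‖d k‖ := by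
      have := real_inner_le_norm v (d k); simpa [hv] using this
    nlinarith [hinner k, mul_pos hε (ht0 k)]
  have hdle : ∀ k, ‖d k‖ ≤ 2 * t k := fun k => by
    have h2 : ‖(xb + t k • v) - y k‖ ≤ t k := by
      rw [← dist_eq_norm, hyd k]; exact hle k
    have h3 : ‖d k‖ ≤ ‖(y k) - (xb + t k • v)‖ + ‖t k • v‖ := by
      have : d k = (y k - (xb + t k • v)) + t k • v := by simp [hd]; abel
      rw [this]; exact norm_add_le _ _
    have h4 : ‖(y k) - (xb + t k • v)‖ = ‖(xb + t k • v) - y k‖ := norm_sub_rev _ _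
    rw [h4] at h3
    have h5 : ‖t k • v‖ = t k := by rw [norm_smul, hv, Real.norm_eq_abs, abs_of_pos (ht0 k)]; ring
    linarith
  -- unit vectors on the sphere
  set u : ℕ → EuclideanSpace ℝ (Fin n) := fun k => ‖d k‖⁻¹ • d k with hu
  have humem : ∀ k, u k ∈ Metric.sphere (0 : EuclideanSpace ℝ (Fin n)) 1 := fun k => by
    rw [mem_sphere_zero_iff_norm]
    exact norm_smul_inv_norm (norm_pos_iff.mp (hdpos k))
  obtain ⟨w, hwmem, φ, hφ, hconv⟩ :=
    (isCompact_sphere (0 : EuclideanSpace ℝ (Fin n)) 1).tendsto_subseq humem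
  -- t ∘ φ tends to 0 within >0
  have htφ : Tendsto (fun k => t (φ k)) atTop (𝓝[>] (0:ℝ)) :=
    htend.comp hφ.tendsto_atTop
  have htφ0 : Tendsto (fun k => t (φ k)) atTop (𝓝 (0:ℝ)) :=
    htφ.mono_right nhdsWithin_le_nhds
  -- ‖d ∘ φ‖ → 0
  have hdφ0 : Tendsto (fun k => ‖d (φ k)‖) atTop (𝓝 (0:ℝ)) := by
    have h2t : Tendsto (fun k => 2 * t (φ k)) atTop (𝓝 (0:ℝ)) := by
      simpa using htφ0.const_mul 2
    exact squeeze_zero (fun k => norm_nonneg _) (fun k => hdle (φ k)) h2t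
  have hcinf : Tendsto (fun k => (‖d (φ k)‖)⁻¹) atTop atTop := by
    apply Filter.Tendsto.inv_tendsto_nhdsGT_zero
    exact tendsto_nhdsWithin_of_tendsto_nhds_of_eventually_within _ hdφ0
      (Filter.Eventually.of_forall fun k => hdpos (φ k))
  -- w is in the positive tangent cone
  have hwT : w ∈ posTangentConeAt S xb := by
    refine mem_tangentConeAt_of_seq atTop (fun k => (‖d (φ k)‖₊)⁻¹) (fun k => d (φ k))
      (tendsto_zero_iff_norm_tendsto_zero.mpr hdφ0) (Filter.Eventually.of_forall fun k => ?_)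
      (hconv.congr fun k => by rw [NNReal.smul_def]; simp [hu])
    have : xb + d (φ k) = y (φ k) := by simp [hd]
    rw [this]; exact hyS (φ k)
  -- inner product bound passes to the limit
  have hlb : ∀ k, ε / 2 ≤ ⟪v, u (φ k)⟫ := fun k => by
    have h1 : ε * t (φ k) < ⟪v, d (φ k)⟫ := hinner (φ k)
    have h2 : ‖d (φ k)‖ ≤ 2 * t (φ k) := hdle (φ k)
    have h3 : 0 < ‖d (φ k)‖ := hdpos (φ k)
    have h4 : ⟪v, u (φ k)⟫ = (‖d (φ k)‖)⁻¹ * ⟪v, d (φ k)⟫ := real_inner_smul_right _ _ _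
    rw [h4, le_inv_mul_iff₀ h3]
    nlinarith [ht0 (φ k), hε]
  have hcont : Tendsto (fun k => ⟪v, u (φ k)⟫) atTop (𝓝 ⟪v, w⟫) :=
    (Filter.Tendsto.inner tendsto_const_nhds hconv)
  have hfin : ε / 2 ≤ ⟪v, w⟫ := le_of_tendsto_of_tendsto' tendsto_const_nhds hcont hlb
  have := hvN w hwT
  linarith
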